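/- Let φ : (0, ∞) → ℝ be differentiable satisfying φ'(σ) + (m/σ − μ)·φ(σ) = κ − 2σ (i.e. λ = −1) with κ > 0. Then φ has at most one zero a with 0 < a < κ/2 and at most one zero b with b > κ/2, where at any zero a in (0, κ/2) one has φ'(a) = κ − 2a > 0 and at any zero b > κ/2 one has φ'(b) = κ − 2b < 0. Consequently φ has at most two zeros in (0, κ/2) ∪ (κ/2, ∞). -/

import Mathlib

/-- Shrinking case λ = −1: at any zero a ∈ (0, κ/2) one has φ'(a) = κ − 2a > 0, at any
    zero b > κ/2 one has φ'(b) = κ − 2b < 0; there is at most one zero in each region,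
    hence at most two zeros in (0, κ/2) ∪ (κ/2, ∞). -/
theorem stmt_2 (m : ℕ) (hm : 1 ≤ m) (κ μ : ℝ) (hκ : 0 < κ) (φ : ℝ → ℝ)
    (hdiff : ∀ σ : ℝ, 0 < σ → DifferentiableAt ℝ φ σ)
    (hode : ∀ σ : ℝ, 0 < σ → deriv φ σ + ((m : ℝ) / σ - μ) * φ σ = κ - 2 * σ) :
    (∀ a ∈ Set.Ioo 0 (κ / 2), φ a = 0 → deriv φ a = κ - 2 * a ∧ 0 < κ - 2 * a) ∧
    (∀ b ∈ Set.Ioi (κ / 2), φ b = 0 → deriv φ b = κ - 2 * b ∧ κ - 2 * b < 0) ∧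
    Set.Subsingleton {a | a ∈ Set.Ioo 0 (κ / 2) ∧ φ a = 0} ∧
    Set.Subsingleton {b | b ∈ Set.Ioi (κ / 2) ∧ φ b = 0} ∧
    Set.encard {σ | σ ∈ Set.Ioo 0 (κ / 2) ∪ Set.Ioi (κ / 2) ∧ φ σ = 0} ≤ 2 := by
  set w : ℝ → ℝ := fun σ => σ ^ m * Real.exp (-μ * σ) with hw
  have hwpos : ∀ σ : ℝ, 0 < σ → 0 < w σ := fun σ hσ => mul_pos (pow_pos hσ m) (Real.exp_pos _)
  have hF : ∀ σ : ℝ, 0 < σ → HasDerivAt (fun x => w x * φ x) (w σ * (κ - 2 * σ)) σ := by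
    intro σ hσ
    have h1 : HasDerivAt (fun x : ℝ => x ^ m) ((m : ℝ) * σ ^ (m - 1)) σ := hasDerivAt_pow m σ
    have h2 : HasDerivAt (fun x : ℝ => Real.exp (-μ * x)) (Real.exp (-μ * σ) * (-μ)) σ := by
      simpa using ((hasDerivAt_id σ).const_mul (-μ)).exp
    have hw' : HasDerivAt w ((m : ℝ) * σ ^ (m - 1) * Real.exp (-μ * σ)
        + σ ^ m * (Real.exp (-μ * σ) * (-μ))) σ := h1.mul h2
    have hφ := (hdiff σ hσ).hasDerivAt
    have hmain : HasDerivAt (fun x => w x * φ x) _ σ := hw'.mul hφ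
    convert hmain using 1
    have hσ' : σ ≠ 0 := ne_of_gt hσ
    have hpow : σ ^ m = σ ^ (m - 1) * σ := by
      rw [← pow_succ, Nat.sub_add_cancel hm]
    have hd : deriv φ σ = κ - 2 * σ - ((m : ℝ) / σ - μ) * φ σ := by
      have := hode σ hσ; linarith
    rw [hd]
    simp only [hw, hpow]
    field_simp
    ring
  have hmono : StrictMonoOn (fun x => w x * φ x) (Set.Ioo 0 (κ / 2)) := by
    apply strictMonoOn_of_deriv_pos (convex_Ioo _ _)
    · intro x hx
      exact ((hF x hx.1).differentiableAt.continuousAt).continuousWithinAt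
    · rw [interior_Ioo]
      intro x hx
      rw [(hF x hx.1).deriv]
      have : 0 < κ - 2 * x := by have := hx.2; linarith
      exact mul_pos (hwpos x hx.1) this
  have hanti : StrictAntiOn (fun x => w x * φ x) (Set.Ioi (κ / 2)) := by
    apply strictAntiOn_of_deriv_neg (convex_Ioi _)
    · intro x hx
      have hx0 : 0 < x := lt_trans (half_pos hκ) hx
      exact ((hF x hx0).differentiableAt.continuousAt).continuousWithinAt
    · rw [interior_Ioi]
      intro x hx
      have hx0 : 0 < x := lt_trans (half_pos hκ) hx
      rw [(hF x hx0).deriv]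
      have : κ - 2 * x < 0 := by have : κ / 2 < x := hx; linarith
      exact mul_neg_of_pos_of_neg (hwpos x hx0) this
  have hzero1 : ∀ a ∈ Set.Ioo 0 (κ / 2), φ a = 0 → deriv φ a = κ - 2 * a ∧ 0 < κ - 2 * a := by
    intro a ha h0
    have := hode a ha.1
    rw [h0] at this
    constructor
    · linarith
    · have := ha.2; linarith
  have hzero2 : ∀ b ∈ Set.Ioi (κ / 2), φ b = 0 → deriv φ b = κ - 2 * b ∧ κ - 2 * b < 0 := by
    intro b hb h0
    have hb0 : 0 < b := lt_trans (half_pos hκ) hb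
    have := hode b hb0
    rw [h0] at this
    constructor
    · linarith
    · have : κ / 2 < b := hb; linarith
  have hs1 : Set.Subsingleton {a | a ∈ Set.Ioo 0 (κ / 2) ∧ φ a = 0} := by
    intro a ha a' ha'
    apply hmono.injOn ha.1 ha'.1
    simp [ha.2, ha'.2]
  have hs2 : Set.Subsingleton {b | b ∈ Set.Ioi (κ / 2) ∧ φ b = 0} := by
    intro a ha a' ha'
    apply hanti.injOn ha.1 ha'.1
    simp [ha.2, ha'.2]
  refine ⟨hzero1, hzero2, hs1, hs2, ?_⟩
  have hsplit : {σ | σ ∈ Set.Ioo 0 (κ / 2) ∪ Set.Ioi (κ / 2) ∧ φ σ = 0} =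
      {a | a ∈ Set.Ioo 0 (κ / 2) ∧ φ a = 0} ∪ {b | b ∈ Set.Ioi (κ / 2) ∧ φ b = 0} := by
    ext x
    simp only [Set.mem_setOf_eq, Set.mem_union]
    tauto
  rw [hsplit]
  calc Set.encard _ ≤ _ + _ := Set.encard_union_le _ _
    _ ≤ 1 + 1 := add_le_add (Set.encard_le_one_iff.mpr fun a b ha hb => hs1 ha hb)
        (Set.encard_le_one_iff.mpr fun a b ha hb => hs2 ha hb)
    _ = 2 := by norm_num
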